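/- (Lagrangian dual function for f-divergence constraints.) Let f : [0,∞) → ℝ be a function, and define its conjugate f*(s) = sup_{t ≥ 0} (t·s − f(t)) ∈ ℝ ∪ {+∞}. Let π^nom ∈ ℝ^K with π^nom_i > 0 for all i and 𝟏ᵀπ^nom = 1, let x ∈ ℝ^K, γ ∈ ℝ, and λ > 0. Then sup{ πᵀx − λ·Σ_{i=1}^K π^nom_i f(π_i/π^nom_i) − γ(𝟏ᵀπ − 1) : π ∈ ℝ^K, π ≥ 0 } = Σ_{i=1}^K π^nom_i · λ f*((x_i − γ)/λ) + γ. -/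

import Mathlib

open Finset

/-- The Fenchel conjugate over the nonnegative reals, `f*(s) = sup_{t ≥ 0} (t s − f(t))`,
with values in the extended reals. -/
noncomputable def fenchelConjNonneg (f : ℝ → ℝ) (s : ℝ) : EReal :=
  ⨆ t : {t : ℝ // 0 ≤ t}, (((t : ℝ) * s - f t : ℝ) : EReal)

namespace FDivAux

/-- Multiplication by a positive real constant as an order isomorphism of `EReal`. -/
noncomputable def mulIso (c : ℝ) (hc : 0 < c) : EReal ≃o EReal where
  toFun x := (c : EReal) * x
  invFun x := ((c⁻¹ : ℝ) : EReal) * x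
  left_inv x := by
    show ((c⁻¹ : ℝ) : EReal) * ((c : EReal) * x) = x
    rw [← mul_assoc, ← EReal.coe_mul, inv_mul_cancel₀ hc.ne', EReal.coe_one, one_mul]
  right_inv x := by
    show (c : EReal) * (((c⁻¹ : ℝ) : EReal) * x) = x
    rw [← mul_assoc, ← EReal.coe_mul, mul_inv_cancel₀ hc.ne', EReal.coe_one, one_mul]
  map_rel_iff' := by
    intro a b
    simp only [Equiv.coe_fn_mk]
    constructor
    · intro h
      have h2 : ((c⁻¹ : ℝ) : EReal) * ((c : EReal) * a) ≤ ((c⁻¹ : ℝ) : EReal) * ((c : EReal) * b) :=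
        mul_le_mul_of_nonneg_left h (by exact_mod_cast (inv_pos.2 hc).le)
      rwa [← mul_assoc, ← mul_assoc, ← EReal.coe_mul, inv_mul_cancel₀ hc.ne',
        EReal.coe_one, one_mul, one_mul] at h2
    · intro h
      exact mul_le_mul_of_nonneg_left h (by exact_mod_cast hc.le)

/-- Addition of a real constant as an order isomorphism of `EReal`. -/
noncomputable def addIso (c : ℝ) : EReal ≃o EReal where
  toFun x := x + (c : EReal)
  invFun x := x - (c : EReal)
  left_inv x := EReal.add_sub_cancel_right
  right_inv x := EReal.sub_add_cancel
  map_rel_iff' := by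
    intro a b
    exact (EReal.addLECancellable_coe c).add_le_add_iff_right

lemma mul_iSup {ι : Type*} (c : ℝ) (hc : 0 < c) (g : ι → EReal) :
    (c : EReal) * (⨆ i, g i) = ⨆ i, (c : EReal) * g i :=
  (mulIso c hc).map_iSup g

lemma iSup_add_coe {ι : Type*} (c : ℝ) (g : ι → EReal) :
    (⨆ i, g i) + (c : EReal) = ⨆ i, (g i + (c : EReal)) :=
  (addIso c).map_iSup g

lemma iSup_coe_ne_bot {ι : Type*} [Nonempty ι] (A : ι → ℝ) :
    (⨆ i, ((A i : ℝ) : EReal)) ≠ ⊥ := by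
  obtain ⟨i⟩ := ‹Nonempty ι›
  exact ((EReal.bot_lt_coe (A i)).trans_le (le_iSup (fun i => ((A i : ℝ) : EReal)) i)).ne'

lemma iSup_add_iSup {ι κ : Type*} [Nonempty ι] [Nonempty κ] (A : ι → ℝ) (B : κ → ℝ) :
    (⨆ a, ((A a : ℝ) : EReal)) + (⨆ b, ((B b : ℝ) : EReal))
      = ⨆ a, ⨆ b, ((A a + B b : ℝ) : EReal) := by
  set T : EReal := ⨆ b, ((B b : ℝ) : EReal) with hT
  have hTbot : T ≠ ⊥ := iSup_coe_ne_bot B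
  have inner : ∀ a : ι, (⨆ b, ((A a + B b : ℝ) : EReal)) = (A a : EReal) + T := by
    intro a
    simp only [EReal.coe_add]
    rw [hT]
    rw [show (A a : EReal) + (⨆ b, ((B b : ℝ) : EReal))
        = (⨆ b, ((B b : ℝ) : EReal)) + (A a : EReal) from add_comm _ _,
      iSup_add_coe]
    congr 1
    ext b
    exact add_comm _ _
  rw [show (⨆ a, ⨆ b, ((A a + B b : ℝ) : EReal)) = ⨆ a, ((A a : EReal) + T) from
    iSup_congr inner]
  rcases eq_top_or_lt_top T with hTtop | hlt
  · rw [hTtop]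
    have h1 : ∀ a : ι, (A a : EReal) + (⊤ : EReal) = ⊤ := fun a =>
      EReal.add_top_of_ne_bot (EReal.bot_lt_coe _).ne'
    rw [iSup_congr h1, iSup_const]
    exact EReal.add_top_of_ne_bot (iSup_coe_ne_bot A)
  · lift T to ℝ using ⟨hlt.ne, hTbot⟩ with t ht
    rw [show (⨆ a, ((A a : EReal) + (t : EReal))) = (⨆ a, ((A a : ℝ) : EReal)) + (t : EReal) from
      (iSup_add_coe t _).symm]

lemma iSup_sum_eq {K : ℕ} {τ : Type*} [Nonempty τ] (g : Fin K → τ → ℝ) (s : Finset (Fin K)) :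
    (⨆ t : Fin K → τ, ((∑ i ∈ s, g i (t i) : ℝ) : EReal))
      = ∑ i ∈ s, ⨆ u : τ, ((g i u : ℝ) : EReal) := by
  induction s using Finset.induction with
  | empty => simp
  | insert a s ha ih =>
    rw [show (⨆ t : Fin K → τ, ((∑ i ∈ insert a s, g i (t i) : ℝ) : EReal)) = ⨆ t : Fin K → τ, ((g a (t a) + ∑ i ∈ s, g i (t i) : ℝ) : EReal) from iSup_congr fun t => by rw [Finset.sum_insert ha], Finset.sum_insert ha, ← ih]
    have key : (⨆ t : Fin K → τ, ((g a (t a) + ∑ i ∈ s, g i (t i) : ℝ) : EReal))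
        = ⨆ u : τ, ⨆ t : Fin K → τ, ((g a u + ∑ i ∈ s, g i (t i) : ℝ) : EReal) := by
      apply le_antisymm
      · refine iSup_le fun t => ?_
        exact le_iSup_of_le (t a) (le_iSup_of_le t le_rfl)
      · refine iSup_le fun u => iSup_le fun t => ?_
        refine le_iSup_of_le (Function.update t a u) (le_of_eq ?_)
        have h1 : Function.update t a u a = u := Function.update_self a u t
        have h2 : ∑ i ∈ s, g i (Function.update t a u i) = ∑ i ∈ s, g i (t i) :=
          Finset.sum_congr rfl fun i hi => by
            rw [Function.update_of_ne (by rintro rfl; exact ha hi)]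
        rw [h1, h2]
    rw [key, ← iSup_add_iSup (fun u => g a u) (fun t : Fin K → τ => ∑ i ∈ s, g i (t i))]

end FDivAux

theorem f_divergence_dual (K : ℕ) (f : ℝ → ℝ)
    (πnom : Fin K → ℝ) (hπnom : ∀ i, 0 < πnom i) (hπnom1 : ∑ i, πnom i = 1)
    (x : Fin K → ℝ) (γ : ℝ) (lam : ℝ) (hlam : 0 < lam) :
    (⨆ π : {π : Fin K → ℝ // ∀ i, 0 ≤ π i},
        ((∑ i, (π : Fin K → ℝ) i * x i
          - lam * ∑ i, πnom i * f ((π : Fin K → ℝ) i / πnom i)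
          - γ * ((∑ i, (π : Fin K → ℝ) i) - 1) : ℝ) : EReal)) =
      (∑ i, (πnom i : EReal) * ((lam : EReal) * fenchelConjNonneg f ((x i - γ) / lam)))
        + (γ : EReal) := by
  haveI : Nonempty {t : ℝ // 0 ≤ t} := ⟨⟨0, le_rfl⟩⟩
  set g : Fin K → {t : ℝ // 0 ≤ t} → ℝ :=
    fun i u => (πnom i * lam) * ((u : ℝ) * ((x i - γ) / lam) - f u) with hg
  -- rewrite RHS
  have hRHS : ∀ i : Fin K, (πnom i : EReal) * ((lam : EReal) * fenchelConjNonneg f ((x i - γ) / lam))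
      = ⨆ u : {t : ℝ // 0 ≤ t}, ((g i u : ℝ) : EReal) := by
    intro i
    rw [← mul_assoc, ← EReal.coe_mul, fenchelConjNonneg,
      FDivAux.mul_iSup _ (mul_pos (hπnom i) hlam)]
    exact iSup_congr fun u => by rw [← EReal.coe_mul]
  rw [Finset.sum_congr rfl fun i _ => hRHS i,
    ← FDivAux.iSup_sum_eq g Finset.univ, FDivAux.iSup_add_coe]
  -- change of variables on LHS
  let e : (Fin K → {t : ℝ // 0 ≤ t}) ≃ {π : Fin K → ℝ // ∀ i, 0 ≤ π i} :=
    { toFun := fun t => ⟨fun i => πnom i * t i, fun i => mul_nonneg (hπnom i).le (t i).2⟩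
      invFun := fun π => fun i => ⟨(π : Fin K → ℝ) i / πnom i,
        div_nonneg (π.2 i) (hπnom i).le⟩
      left_inv := fun t => by
        funext i
        exact Subtype.ext (mul_div_cancel_left₀ _ (hπnom i).ne')
      right_inv := fun π => by
        apply Subtype.ext
        funext i
        simp only
        rw [mul_comm, div_mul_cancel₀ _ (hπnom i).ne'] }
  rw [← e.iSup_comp]
  congr 1
  ext t
  rw [← EReal.coe_add]
  norm_cast
  have harg : ∀ i : Fin K, πnom i * (t i : ℝ) / πnom i = (t i : ℝ) :=
    fun i => mul_div_cancel_left₀ _ (hπnom i).ne'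
  simp only [e, Equiv.coe_fn_mk, harg]
  have hsum : ∑ i, g i (t i)
      = ∑ i, (πnom i * (t i : ℝ) * x i - γ * (πnom i * (t i : ℝ)) - lam * (πnom i * f (t i))) :=
    Finset.sum_congr rfl fun i _ => by rw [hg]; field_simp
  rw [hsum, Finset.sum_sub_distrib, Finset.sum_sub_distrib, ← Finset.mul_sum, ← Finset.mul_sum]
  ring
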